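/- arXiv:cs/0102003 — 4 statements merged into one kernel-verified Lean document; each statement's English description precedes it below -/
import Mathlib

section
/- For a stock price following a binomial tree with n periods, uptick factor u, downtick factor d, uptick probability p, if two paths ω_X and ω_Y differ in exactly one step (ω_X has an uptick where ω_Y has a downtick, with u = 1/d), then the ratio of running totals satisfies T_n(ω_X)/T_n(ω_Y) ≤ u², and hence |ln T_n(ω_X) − ln T_n(ω_Y)| ≤ 2 ln u. -/
open Finset

/-- If two paths `ωX, ωY` through the binomial tree (steps `±1`, uptick factor
`u`, downtick `d = 1/u`) differ in exactly one step, where `ωX` has an uptick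
and `ωY` a downtick, then the running totals `T_n(ω) = Σ_{t=0}^n S₀ u^{Σ_{i≤t} ω_i}`
satisfy `T_n(ωX)/T_n(ωY) ≤ u²` and `|ln T_n(ωX) − ln T_n(ωY)| ≤ 2 ln u`. -/
theorem running_total_bounded_difference (n : ℕ) (S₀ u : ℝ) (hS₀ : 0 < S₀) (hu : 1 < u)
    (ωX ωY : Fin n → ℤ)
    (hX : ∀ i, ωX i = 1 ∨ ωX i = -1) (hY : ∀ i, ωY i = 1 ∨ ωY i = -1)
    (j : Fin n) (hjX : ωX j = 1) (hjY : ωY j = -1)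
    (hother : ∀ i, i ≠ j → ωX i = ωY i)
    (T : (Fin n → ℤ) → ℝ)
    (hT : ∀ ω, T ω = ∑ t ∈ Finset.range (n + 1),
        S₀ * u ^ (∑ i ∈ Finset.univ.filter (fun i : Fin n => (i : ℕ) < t), ω i)) :
    T ωX / T ωY ≤ u ^ 2 ∧
    |Real.log (T ωX) - Real.log (T ωY)| ≤ 2 * Real.log u := by
  have hu0 : (0:ℝ) < u := lt_trans one_pos hu
  have hune : u ≠ 0 := ne_of_gt hu0
  -- key: partial sums relation
  have key : ∀ t : ℕ,
      (∑ i ∈ Finset.univ.filter (fun i : Fin n => (i : ℕ) < t), ωX i)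
        = (∑ i ∈ Finset.univ.filter (fun i : Fin n => (i : ℕ) < t), ωY i)
          + (if (j : ℕ) < t then 2 else 0) := by
    intro t
    set s := Finset.univ.filter (fun i : Fin n => (i : ℕ) < t) with hs
    have hdiff : (∑ i ∈ s, ωX i) - (∑ i ∈ s, ωY i)
        = ∑ i ∈ s, (ωX i - ωY i) := by rw [Finset.sum_sub_distrib]
    by_cases hj : (j : ℕ) < t
    · have hjs : j ∈ s := by simp [hs, hj]
      have : ∑ i ∈ s, (ωX i - ωY i) = ωX j - ωY j := by
        apply Finset.sum_eq_single_of_mem j hjs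
        intro b _ hb
        rw [hother b hb]; ring
      rw [if_pos hj]
      have h2 : ωX j - ωY j = 2 := by rw [hjX, hjY]; ring
      omega
    · have : ∑ i ∈ s, (ωX i - ωY i) = 0 := by
        apply Finset.sum_eq_zero
        intro b hbs
        have hb : b ≠ j := by
          rintro rfl
          simp [hs] at hbs
          exact hj hbs
        rw [hother b hb]; ring
      rw [if_neg hj]
      omega
  -- termwise bounds
  have hterm : ∀ t : ℕ,
      (S₀ * u ^ (∑ i ∈ Finset.univ.filter (fun i : Fin n => (i : ℕ) < t), ωY i)
        ≤ S₀ * u ^ (∑ i ∈ Finset.univ.filter (fun i : Fin n => (i : ℕ) < t), ωX i))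
      ∧ (S₀ * u ^ (∑ i ∈ Finset.univ.filter (fun i : Fin n => (i : ℕ) < t), ωX i)
        ≤ u ^ 2 * (S₀ * u ^ (∑ i ∈ Finset.univ.filter (fun i : Fin n => (i : ℕ) < t), ωY i))) := by
    intro t
    set a := ∑ i ∈ Finset.univ.filter (fun i : Fin n => (i : ℕ) < t), ωY i with ha
    have hX' : u ^ ((∑ i ∈ Finset.univ.filter (fun i : Fin n => (i : ℕ) < t), ωX i))
        = u ^ a * u ^ ((if (j : ℕ) < t then 2 else 0) : ℤ) := by
      rw [key t, zpow_add₀ hune]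
    have hpa : (0:ℝ) < u ^ a := zpow_pos hu0 a
    have hc1 : (1:ℝ) ≤ u ^ ((if (j : ℕ) < t then 2 else 0) : ℤ) := by
      split
      · have : (1:ℝ) ≤ u := le_of_lt hu
        calc (1:ℝ) ≤ u := this
          _ ≤ u * u := le_mul_of_one_le_left (le_of_lt hu0) this
          _ = u ^ (2:ℤ) := by rw [zpow_two]
      · norm_num
    have hc2 : u ^ ((if (j : ℕ) < t then 2 else 0) : ℤ) ≤ u ^ (2:ℕ) := by
      split
      · rw [zpow_two, sq]
      · simp only [zpow_zero]
        nlinarith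
    constructor
    · rw [hX']
      have : u ^ a ≤ u ^ a * u ^ ((if (j : ℕ) < t then 2 else 0) : ℤ) :=
        le_mul_of_one_le_right (le_of_lt hpa) hc1
      nlinarith
    · rw [hX']
      have h1 : u ^ a * u ^ ((if (j : ℕ) < t then 2 else 0) : ℤ) ≤ u ^ a * u ^ (2:ℕ) :=
        mul_le_mul_of_nonneg_left hc2 (le_of_lt hpa)
      nlinarith
  have hTY_le : T ωY ≤ T ωX := by
    rw [hT ωX, hT ωY]
    exact Finset.sum_le_sum (fun t _ => (hterm t).1)
  have hTX_le : T ωX ≤ u ^ 2 * T ωY := by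
    rw [hT ωX, hT ωY, Finset.mul_sum]
    exact Finset.sum_le_sum (fun t _ => (hterm t).2)
  have hTYpos : 0 < T ωY := by
    rw [hT ωY]
    apply Finset.sum_pos
    · intro t _
      exact mul_pos hS₀ (zpow_pos hu0 _)
    · exact Finset.nonempty_range_add_one
  have hTXpos : 0 < T ωX := lt_of_lt_of_le hTYpos hTY_le
  have hratio : T ωX / T ωY ≤ u ^ 2 := by
    rw [div_le_iff₀ hTYpos]
    linarith [hTX_le]
  refine ⟨hratio, ?_⟩
  have hlogle : Real.log (T ωY) ≤ Real.log (T ωX) :=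
    Real.log_le_log hTYpos hTY_le
  rw [abs_of_nonneg (by linarith)]
  have : Real.log (T ωX) ≤ Real.log (u ^ 2 * T ωY) :=
    Real.log_le_log hTXpos hTX_le
  rw [Real.log_mul (by positivity) (ne_of_gt hTYpos), Real.log_pow] at this
  push_cast at this
  linarith
end

section
/- Let T_n be the running total of stock prices in the binomial model with uptick factor u = e^{σ/√n}, and let C = e^{E(ln T_n)}. Then for any λ > 0, P(T_n ≤ C e^{−σλ} or T_n ≥ C e^{σλ}) ≤ 2 e^{−λ²/2}. -/
open MeasureTheory ProbabilityTheory

section Aux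

/-- Hoeffding's lemma core: `log (1 - p + p * exp t) - p * t ≤ t^2/8`. -/
lemma hoeffding_core {p : ℝ} (hp0 : 0 ≤ p) (hp1 : p ≤ 1) (t : ℝ) :
    Real.log (1 - p + p * Real.exp t) - p * t ≤ t ^ 2 / 8 := by
  set D : ℝ → ℝ := fun t => 1 - p + p * Real.exp t with hD
  have hDpos : ∀ s, 0 < D s := by
    intro s
    have := Real.exp_pos s
    rcases lt_or_eq_of_le hp0 with h | h
    · have : 0 < p * Real.exp s := by positivity
      simp only [hD]; nlinarith
    · simp only [hD, ← h]; norm_num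
  -- derivative of φ
  set ψ : ℝ → ℝ := fun s => p * Real.exp s / D s - p with hψ
  have hDder : ∀ s, HasDerivAt D (p * Real.exp s) s := by
    intro s
    exact ((Real.hasDerivAt_exp s).const_mul p).const_add (1 - p)
  have hφder : ∀ s, HasDerivAt (fun s => Real.log (D s) - p * s) (ψ s) s := by
    intro s
    have h1 : HasDerivAt (fun s => Real.log (D s)) (p * Real.exp s / D s) s :=
      (hDder s).log (hDpos s).ne'
    exact (h1.sub ((hasDerivAt_id s).const_mul p)).congr_deriv (by simp [hψ])
  have hψder : ∀ s, HasDerivAt ψ (p * Real.exp s * (1 - p) / (D s) ^ 2) s := by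
    intro s
    have h1 : HasDerivAt (fun s => p * Real.exp s) (p * Real.exp s) s :=
      (Real.hasDerivAt_exp s).const_mul p
    have h2 := h1.div (hDder s) (hDpos s).ne'
    have heq : (p * Real.exp s * D s - p * Real.exp s * (p * Real.exp s)) / (D s) ^ 2
        = p * Real.exp s * (1 - p) / (D s) ^ 2 := by
      simp only [hD]; ring
    simpa [hψ, heq] using (h2.sub_const p)
  have hψ'bound : ∀ s, |p * Real.exp s * (1 - p) / (D s) ^ 2| ≤ 1 / 4 := by
    intro s
    have hps := Real.exp_pos s
    have hnum : 0 ≤ p * Real.exp s * (1 - p) := by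
      have : 0 ≤ 1 - p := by linarith
      positivity
    have hD2 : 0 < (D s) ^ 2 := pow_pos (hDpos s) 2
    rw [abs_of_nonneg (div_nonneg hnum hD2.le), div_le_iff₀ hD2]
    have : 0 ≤ ((1 - p) - p * Real.exp s) ^ 2 := sq_nonneg _
    simp only [hD] at *
    nlinarith
  have hψ0 : ψ 0 = 0 := by simp [hψ, hD]
  -- |ψ s| ≤ |s| / 4
  have hψbound : ∀ s, |ψ s| ≤ |s| / 4 := by
    intro s
    have hint : ∫ x in (0:ℝ)..s, (p * Real.exp x * (1 - p) / (D x) ^ 2) = ψ s - ψ 0 := by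
      apply intervalIntegral.integral_eq_sub_of_hasDerivAt (fun x _ => hψder x)
      apply Continuous.intervalIntegrable
      have hDc : Continuous D := by
        simp only [hD]; continuity
      exact ((continuous_const.mul Real.continuous_exp).mul continuous_const).div (hDc.pow 2)
        (fun x => (pow_pos (hDpos x) 2).ne')
    rw [hψ0, sub_zero] at hint
    rw [← hint]
    calc ‖∫ x in (0:ℝ)..s, (p * Real.exp x * (1 - p) / (D x) ^ 2)‖
        ≤ 1/4 * |s - 0| := intervalIntegral.norm_integral_le_of_norm_le_const
          (fun x _ => by rw [Real.norm_eq_abs]; exact (hψ'bound x).trans (by norm_num))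
      _ = |s| / 4 := by rw [sub_zero]; ring
  -- φ t ≤ t^2/8
  have hφ0 : Real.log (D 0) - p * 0 = 0 := by simp [hD]
  have hφint : ∫ x in (0:ℝ)..t, ψ x = (Real.log (D t) - p * t) - (Real.log (D 0) - p * 0) := by
    apply intervalIntegral.integral_eq_sub_of_hasDerivAt (fun x _ => hφder x)
    apply Continuous.intervalIntegrable
    have hDc : Continuous D := by simp only [hD]; continuity
    exact ((continuous_const.mul Real.continuous_exp).div hDc fun x => (hDpos x).ne').sub
      continuous_const
  rw [hφ0, sub_zero] at hφint
  rw [← hφint]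
  have hψcont : Continuous ψ := by
    have hDc : Continuous D := by simp only [hD]; continuity
    exact ((continuous_const.mul Real.continuous_exp).div hDc fun x => (hDpos x).ne').sub
      continuous_const
  calc ∫ x in (0:ℝ)..t, ψ x ≤ ∫ x in (0:ℝ)..t, x / 4 := by
        rcases le_or_gt 0 t with ht | ht
        · apply intervalIntegral.integral_mono_on ht
            (hψcont.intervalIntegrable 0 t)
            ((continuous_id.div_const 4).intervalIntegrable 0 t)
          intro x hx
          simp only [id_eq]
          have := (abs_le.1 (hψbound x)).2
          rwa [abs_of_nonneg hx.1] at this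
        · rw [intervalIntegral.integral_symm, intervalIntegral.integral_symm t 0]
          apply neg_le_neg
          apply intervalIntegral.integral_mono_on ht.le
            ((continuous_id.div_const 4).intervalIntegrable t 0)
            (hψcont.intervalIntegrable t 0)
          intro x hx
          simp only [id_eq]
          have := (abs_le.1 (hψbound x)).1
          rw [abs_of_nonpos hx.2] at this
          linarith
    _ = t ^ 2 / 8 := by
        have : ∫ x in (0:ℝ)..t, x / 4 = (∫ x in (0:ℝ)..t, x) / 4 := by
          simpa using intervalIntegral.integral_div 4 (f := fun x => x) (a := 0) (b := t)
        rw [this, integral_id]; ring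

/-- Two-point Hoeffding lemma. -/
lemma two_point {p : ℝ} (hp0 : 0 ≤ p) (hp1 : p ≤ 1) {A B c s : ℝ} (h : |A - B| ≤ c) :
    p * Real.exp (s * A) + (1 - p) * Real.exp (s * B) ≤
      Real.exp (s * (p * A + (1 - p) * B) + s ^ 2 * c ^ 2 / 8) := by
  set t : ℝ := s * (A - B) with ht
  have key : 1 - p + p * Real.exp t ≤ Real.exp (p * t + t ^ 2 / 8) := by
    have h1 := hoeffding_core hp0 hp1 t
    have hpos : 0 < 1 - p + p * Real.exp t := by
      rcases lt_or_eq_of_le hp0 with h | h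
      · have := Real.exp_pos t; nlinarith
      · rw [← h]; norm_num
    rw [sub_le_iff_le_add, ← Real.log_exp (t ^ 2 / 8 + p * t)] at h1
    have := (Real.log_le_log_iff hpos (Real.exp_pos _)).1 h1
    rwa [add_comm (t ^ 2 / 8)] at this
  have expand : p * Real.exp (s * A) + (1 - p) * Real.exp (s * B)
      = Real.exp (s * B) * (1 - p + p * Real.exp t) := by
    have hAB : Real.exp (s * B) * Real.exp t = Real.exp (s * A) := by
      rw [← Real.exp_add]; congr 1; rw [ht]; ring
    rw [mul_add, mul_comm (Real.exp (s * B)) (1 - p), mul_comm p (Real.exp t),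
      ← mul_assoc, hAB]
    ring
  rw [expand]
  have h2 : Real.exp (s * B) * (1 - p + p * Real.exp t)
      ≤ Real.exp (s * B) * Real.exp (p * t + t ^ 2 / 8) :=
    mul_le_mul_of_nonneg_left key (Real.exp_pos _).le
  refine h2.trans ?_
  rw [← Real.exp_add]
  apply Real.exp_le_exp.2
  have htc : t ^ 2 ≤ s ^ 2 * c ^ 2 := by
    have h3 : (A - B) ^ 2 ≤ c ^ 2 := sq_le_sq' (by linarith [abs_le.1 h]) (abs_le.1 h).2
    have : t ^ 2 = s ^ 2 * (A - B) ^ 2 := by rw [ht]; ring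
    nlinarith [sq_nonneg s]
  have : s * B + (p * t + t ^ 2 / 8) = s * (p * A + (1 - p) * B) + t ^ 2 / 8 := by
    rw [ht]; ring
  rw [this]
  linarith

noncomputable def cubeW (p : ℝ) {n : ℕ} (x : Fin n → Bool) : ℝ :=
  ∏ i, (cond (x i) p (1 - p))

lemma cubeW_nonneg {p : ℝ} (hp0 : 0 ≤ p) (hp1 : p ≤ 1) {n : ℕ} (x : Fin n → Bool) :
    0 ≤ cubeW p x :=
  Finset.prod_nonneg fun i _ => by cases x i <;> simp <;> linarith

lemma cubeW_cons {p : ℝ} {n : ℕ} (b : Bool) (y : Fin n → Bool) :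
    cubeW p (Fin.cons b y) = (cond b p (1 - p)) * cubeW p y := by
  rw [cubeW, Fin.prod_univ_succ]
  simp [cubeW]

lemma cube_sum_cons {n : ℕ} (F : (Fin (n + 1) → Bool) → ℝ) :
    ∑ x : Fin (n + 1) → Bool, F x
      = ∑ y : Fin n → Bool, (F (Fin.cons true y) + F (Fin.cons false y)) := by
  rw [← (Fin.consEquiv (fun _ : Fin (n+1) => Bool)).sum_comp F]
  rw [Fintype.sum_prod_type]
  rw [Finset.sum_comm]
  refine Finset.sum_congr rfl fun y _ => ?_
  simp [Fin.consEquiv]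

lemma update_cons_zero {n : ℕ} (b b' : Bool) (y : Fin n → Bool) :
    Function.update (Fin.cons b y : Fin (n+1) → Bool) 0 b' = Fin.cons b' y := by
  ext i
  refine Fin.cases ?_ (fun j => ?_) i
  · simp
  · rw [Function.update_of_ne (Fin.succ_ne_zero j)]
    simp

lemma cons_update {n : ℕ} (b a : Bool) (y : Fin n → Bool) (i : Fin n) :
    Fin.cons b (Function.update y i a) = Function.update (Fin.cons b y : Fin (n+1) → Bool) i.succ a := by
  ext j
  refine Fin.cases ?_ (fun k => ?_) j
  · rw [Function.update_of_ne (Fin.succ_ne_zero i).symm]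
    simp
  · rcases eq_or_ne k i with rfl | hk
    · simp
    · rw [Function.update_of_ne (fun h => hk (Fin.succ_injective _ h))]
      simp [Function.update_of_ne hk]

/-- Discrete McDiarmid mgf bound on the Boolean cube. -/
lemma discrete_mgf {p : ℝ} (hp0 : 0 ≤ p) (hp1 : p ≤ 1) :
    ∀ (n : ℕ) (g : (Fin n → Bool) → ℝ) (c s : ℝ),
    (∀ x i, |g (Function.update x i true) - g (Function.update x i false)| ≤ c) →
    ∑ x : Fin n → Bool, cubeW p x * Real.exp (s * g x)
      ≤ Real.exp (s * ∑ x : Fin n → Bool, cubeW p x * g x + s ^ 2 * n * c ^ 2 / 8) := by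
  intro n
  induction n with
  | zero =>
    intro g c s _
    rw [Fintype.sum_unique, Fintype.sum_unique]
    simp [cubeW]
  | succ n ih =>
    intro g c s hlip
    set h : (Fin n → Bool) → ℝ :=
      fun y => p * g (Fin.cons true y) + (1 - p) * g (Fin.cons false y) with hh
    have hdiff : ∀ y : Fin n → Bool, |g (Fin.cons true y) - g (Fin.cons false y)| ≤ c := by
      intro y
      have := hlip (Fin.cons false y) 0
      rwa [update_cons_zero, update_cons_zero] at this
    have hlh : ∀ (y : Fin n → Bool) (i : Fin n),
        |h (Function.update y i true) - h (Function.update y i false)| ≤ c := by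
      intro y i
      have h1 := hlip (Fin.cons true y) i.succ
      have h2 := hlip (Fin.cons false y) i.succ
      rw [← cons_update, ← cons_update] at h1
      rw [← cons_update, ← cons_update] at h2
      simp only [hh]
      have e : p * g (Fin.cons true (Function.update y i true))
          + (1 - p) * g (Fin.cons false (Function.update y i true))
          - (p * g (Fin.cons true (Function.update y i false))
          + (1 - p) * g (Fin.cons false (Function.update y i false)))
          = p * (g (Fin.cons true (Function.update y i true)) - g (Fin.cons true (Function.update y i false)))
          + (1 - p) * (g (Fin.cons false (Function.update y i true)) - g (Fin.cons false (Function.update y i false))) := by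
        ring
      rw [e]
      calc |_| ≤ |p * (g (Fin.cons true (Function.update y i true)) - g (Fin.cons true (Function.update y i false)))|
            + |(1 - p) * (g (Fin.cons false (Function.update y i true)) - g (Fin.cons false (Function.update y i false)))| := abs_add_le _ _
        _ ≤ p * c + (1 - p) * c := by
            rw [abs_mul, abs_mul, abs_of_nonneg hp0,
              abs_of_nonneg (by linarith : (0:ℝ) ≤ 1 - p)]
            exact add_le_add (mul_le_mul_of_nonneg_left h1 hp0)
              (mul_le_mul_of_nonneg_left h2 (by linarith))
        _ = c := by ring
    have hE : ∑ x : Fin (n+1) → Bool, cubeW p x * g x = ∑ y : Fin n → Bool, cubeW p y * h y := by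
      rw [cube_sum_cons]
      refine Finset.sum_congr rfl fun y _ => ?_
      rw [cubeW_cons, cubeW_cons, hh]
      simp only [cond_true, cond_false]
      ring
    rw [cube_sum_cons]
    have step : ∀ y : Fin n → Bool,
        cubeW p (Fin.cons true y) * Real.exp (s * g (Fin.cons true y))
          + cubeW p (Fin.cons false y) * Real.exp (s * g (Fin.cons false y))
        ≤ cubeW p y * (Real.exp (s * h y) * Real.exp (s ^ 2 * c ^ 2 / 8)) := by
      intro y
      rw [cubeW_cons, cubeW_cons]
      simp only [cond_true, cond_false]
      have tp := two_point hp0 hp1 (hdiff y) (s := s)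
      have hWnn := cubeW_nonneg hp0 hp1 y
      calc p * cubeW p y * Real.exp (s * g (Fin.cons true y))
            + (1 - p) * cubeW p y * Real.exp (s * g (Fin.cons false y))
          = cubeW p y * (p * Real.exp (s * g (Fin.cons true y))
            + (1 - p) * Real.exp (s * g (Fin.cons false y))) := by ring
        _ ≤ cubeW p y * Real.exp (s * (p * g (Fin.cons true y) + (1 - p) * g (Fin.cons false y)) + s ^ 2 * c ^ 2 / 8) :=
            mul_le_mul_of_nonneg_left tp hWnn
        _ = cubeW p y * (Real.exp (s * h y) * Real.exp (s ^ 2 * c ^ 2 / 8)) := by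
            rw [← Real.exp_add, hh]
    calc ∑ y : Fin n → Bool, (cubeW p (Fin.cons true y) * Real.exp (s * g (Fin.cons true y))
            + cubeW p (Fin.cons false y) * Real.exp (s * g (Fin.cons false y)))
        ≤ ∑ y : Fin n → Bool, cubeW p y * (Real.exp (s * h y) * Real.exp (s ^ 2 * c ^ 2 / 8)) :=
          Finset.sum_le_sum fun y _ => step y
      _ = Real.exp (s ^ 2 * c ^ 2 / 8) * ∑ y : Fin n → Bool, cubeW p y * Real.exp (s * h y) := by
          rw [Finset.mul_sum]; refine Finset.sum_congr rfl fun y _ => by ring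
      _ ≤ Real.exp (s ^ 2 * c ^ 2 / 8) * Real.exp (s * ∑ y : Fin n → Bool, cubeW p y * h y + s ^ 2 * n * c ^ 2 / 8) := by
          have := ih h c s hlh
          exact mul_le_mul_of_nonneg_left this (Real.exp_pos _).le
      _ = Real.exp (s * ∑ x : Fin (n+1) → Bool, cubeW p x * g x + s ^ 2 * (n+1 : ℕ) * c ^ 2 / 8) := by
          rw [← Real.exp_add, hE]
          congr 1
          push_cast
          ring

end Aux

open MeasureTheory ProbabilityTheory

/-- Concentration of the running total: with i.i.d. `±1` steps `Y i`,
uptick factor `u = e^{σ/√n}`, stock prices `S_t = S₀ u^{Σ_{i≤t} Y_i}`,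
running total `T_n = Σ_{t=0}^n S_t`, and `C = e^{E(ln T_n)}`, for any `λ > 0`,
`P(T_n ≤ C e^{−σλ} or T_n ≥ C e^{σλ}) ≤ 2 e^{−λ²/2}`. -/
theorem running_total_concentration {Ω : Type*} [MeasureSpace Ω]
    [IsProbabilityMeasure (ℙ : Measure Ω)]
    (n : ℕ) (hn : 0 < n) (σ S₀ p u : ℝ) (hσ : 0 < σ) (hS₀ : 0 < S₀)
    (hp₀ : 0 ≤ p) (hp₁ : p ≤ 1)
    (Y : Fin n → Ω → ℝ) (hYmeas : ∀ i, Measurable (Y i))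
    (hind : iIndepFun Y ℙ)
    (hval : ∀ i ω, Y i ω = 1 ∨ Y i ω = -1)
    (hYp : ∀ i, ℙ {ω | Y i ω = 1} = ENNReal.ofReal p)
    (hu : u = Real.exp (σ / Real.sqrt n))
    (T : Ω → ℝ)
    (hT : ∀ ω, T ω = ∑ t ∈ Finset.range (n + 1),
      S₀ * u ^ (∑ i ∈ Finset.univ.filter (fun i : Fin n => (i : ℕ) < t), Y i ω))
    (C : ℝ) (hC : C = Real.exp (∫ ω, Real.log (T ω)))
    (lam : ℝ) (hlam : 0 < lam) :
    ℙ {ω | T ω ≤ C * Real.exp (-σ * lam) ∨ C * Real.exp (σ * lam) ≤ T ω} ≤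
      ENNReal.ofReal (2 * Real.exp (-lam ^ 2 / 2)) := by
  classical
  have hnR : (0 : ℝ) < n := by exact_mod_cast hn
  have hsqrt : 0 < Real.sqrt n := Real.sqrt_pos.2 hnR
  set r : ℝ := σ / Real.sqrt n with hr
  have hrpos : 0 < r := div_pos hσ hsqrt
  set c : ℝ := 2 * r with hc
  have hupow : ∀ a : ℝ, u ^ a = Real.exp (r * a) := by
    intro a
    rw [Real.rpow_def_of_pos (by rw [hu]; exact Real.exp_pos _), hu, Real.log_exp]
  -- the boolean encoding
  set v : Bool → ℝ := fun b => cond b 1 (-1) with hv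
  set G : (Fin n → Bool) → ℝ := fun x => ∑ t ∈ Finset.range (n + 1),
      S₀ * u ^ (∑ i ∈ Finset.univ.filter (fun i : Fin n => (i : ℕ) < t), v (x i)) with hG
  have hGpos : ∀ x, 0 < G x := by
    intro x
    apply Finset.sum_pos
    · intro t _
      have : (0:ℝ) < u := by rw [hu]; exact Real.exp_pos _
      positivity
    · exact ⟨0, Finset.mem_range.2 (Nat.succ_pos n)⟩
  -- Lipschitz property of log ∘ G
  have hlips : ∀ (x : Fin n → Bool) (i : Fin n),
      |Real.log (G (Function.update x i true)) - Real.log (G (Function.update x i false))| ≤ c := by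
    intro x i
    set x1 := Function.update x i true
    set x0 := Function.update x i false
    have hexp : ∀ t : ℕ,
        (∑ j ∈ Finset.univ.filter (fun j : Fin n => (j : ℕ) < t), v (x1 j))
        = (∑ j ∈ Finset.univ.filter (fun j : Fin n => (j : ℕ) < t), v (x0 j))
          + (if (i : ℕ) < t then 2 else 0) := by
      intro t
      have : ∀ j ∈ Finset.univ.filter (fun j : Fin n => (j : ℕ) < t),
          v (x1 j) = v (x0 j) + (if j = i then 2 else 0) := by
        intro j _
        rcases eq_or_ne j i with rfl | hj
        · simp [x1, x0, hv]; norm_num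
        · rw [if_neg hj]
          simp [x1, x0, Function.update_of_ne hj]
      rw [Finset.sum_congr rfl this, Finset.sum_add_distrib, Finset.sum_ite_eq' _ i]
      simp [Finset.mem_filter]
    have hmono : G x0 ≤ G x1 := by
      apply Finset.sum_le_sum
      intro t _
      have h1 := hexp t
      have : (∑ j ∈ Finset.univ.filter (fun j : Fin n => (j : ℕ) < t), v (x0 j))
          ≤ (∑ j ∈ Finset.univ.filter (fun j : Fin n => (j : ℕ) < t), v (x1 j)) := by
        rw [h1]; split <;> norm_num
      rw [hupow, hupow]
      have : r * (∑ j ∈ Finset.univ.filter (fun j : Fin n => (j : ℕ) < t), v (x0 j))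
          ≤ r * (∑ j ∈ Finset.univ.filter (fun j : Fin n => (j : ℕ) < t), v (x1 j)) :=
        mul_le_mul_of_nonneg_left this hrpos.le
      exact mul_le_mul_of_nonneg_left (Real.exp_le_exp.2 this) hS₀.le
    have hbound : G x1 ≤ Real.exp c * G x0 := by
      rw [Finset.mul_sum]
      apply Finset.sum_le_sum
      intro t _
      rw [hupow, hupow, hexp t]
      have h2 : r * ((∑ j ∈ Finset.univ.filter (fun j : Fin n => (j : ℕ) < t), v (x0 j))
          + (if (i : ℕ) < t then 2 else 0))
          ≤ c + r * (∑ j ∈ Finset.univ.filter (fun j : Fin n => (j : ℕ) < t), v (x0 j)) := by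
        rw [hc]; split <;> nlinarith
      calc S₀ * Real.exp _ ≤ S₀ * (Real.exp c * Real.exp (r * (∑ j ∈ Finset.univ.filter (fun j : Fin n => (j : ℕ) < t), v (x0 j)))) := by
            rw [← Real.exp_add]
            exact mul_le_mul_of_nonneg_left (Real.exp_le_exp.2 h2) hS₀.le
        _ = Real.exp c * (S₀ * Real.exp (r * (∑ j ∈ Finset.univ.filter (fun j : Fin n => (j : ℕ) < t), v (x0 j)))) := by ring
    have h1 : Real.log (G x0) ≤ Real.log (G x1) :=
      Real.log_le_log (hGpos x0) hmono
    have h2 : Real.log (G x1) ≤ c + Real.log (G x0) := by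
      calc Real.log (G x1) ≤ Real.log (Real.exp c * G x0) := Real.log_le_log (hGpos x1) hbound
        _ = c + Real.log (G x0) := by
            rw [Real.log_mul (Real.exp_pos c).ne' (hGpos x0).ne', Real.log_exp]
    rw [abs_le]
    constructor
    · have hcpos : 0 ≤ c := by rw [hc]; positivity
      linarith
    · linarith
  -- atoms
  set A : (Fin n → Bool) → Set Ω := fun x => ⋂ i, Y i ⁻¹' {v (x i)} with hA
  have hAmeas : ∀ x, MeasurableSet (A x) := fun x =>
    MeasurableSet.iInter fun i => (hYmeas i) (measurableSet_singleton _)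
  set χ : Ω → Fin n → Bool := fun ω i => if Y i ω = 1 then true else false with hχ
  have hmem : ∀ ω, ω ∈ A (χ ω) := by
    intro ω
    rw [hA]
    refine Set.mem_iInter.2 fun i => ?_
    simp only [Set.mem_preimage, Set.mem_singleton_iff]
    show Y i ω = v (if Y i ω = 1 then true else false)
    by_cases h : Y i ω = 1
    · rw [if_pos h, h]; simp [hv]
    · rw [if_neg h]
      rcases hval i ω with h1 | h1
      · exact absurd h1 h
      · rw [h1]; simp [hv]
  have huniq : ∀ ω x, ω ∈ A x → χ ω = x := by
    intro ω x hω
    funext i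
    have hi : Y i ω = v (x i) := Set.mem_iInter.1 hω i
    rw [hχ]
    cases hxi : x i
    · have : Y i ω = -1 := by rw [hi, hxi]; simp [hv]
      simp only []
      rw [if_neg]
      rw [this]; norm_num
    · have : Y i ω = 1 := by rw [hi, hxi]; simp [hv]
      simp only []
      rw [if_pos this]
  have hTeq : ∀ x ω, ω ∈ A x → T ω = G x := by
    intro x ω hω
    rw [hT ω, hG]
    refine Finset.sum_congr rfl fun t _ => ?_
    congr 1
    refine congrArg _ (Finset.sum_congr rfl fun i _ => ?_)
    exact Set.mem_iInter.1 hω i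
  -- measures of atoms
  have hProb : ∀ x, ℙ (A x) = ENNReal.ofReal (cubeW p x) := by
    intro x
    have hone : ∀ i, ℙ (Y i ⁻¹' {(1:ℝ)}) = ENNReal.ofReal p := by
      intro i
      have : Y i ⁻¹' {(1:ℝ)} = {ω | Y i ω = 1} := by
        ext ω; simp
      rw [this, hYp i]
    have hmone : ∀ i, ℙ (Y i ⁻¹' {(-1:ℝ)}) = ENNReal.ofReal (1 - p) := by
      intro i
      have hdisj : Disjoint (Y i ⁻¹' {(1:ℝ)}) (Y i ⁻¹' {(-1:ℝ)}) := by
        apply Set.disjoint_left.2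
        intro ω h1 h2
        simp only [Set.mem_preimage, Set.mem_singleton_iff] at h1 h2
        rw [h1] at h2; norm_num at h2
      have hcover : Y i ⁻¹' {(1:ℝ)} ∪ Y i ⁻¹' {(-1:ℝ)} = Set.univ := by
        ext ω
        simp only [Set.mem_union, Set.mem_preimage, Set.mem_singleton_iff, Set.mem_univ,
          iff_true]
        exact hval i ω
      have hsum : ℙ (Y i ⁻¹' {(1:ℝ)}) + ℙ (Y i ⁻¹' {(-1:ℝ)}) = 1 := by
        rw [← measure_union hdisj ((hYmeas i) (measurableSet_singleton _)), hcover,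
          measure_univ]
      rw [hone i] at hsum
      have : ℙ (Y i ⁻¹' {(-1:ℝ)}) = 1 - ENNReal.ofReal p :=
        ENNReal.eq_sub_of_add_eq (by simp) (by rw [add_comm] at hsum; exact hsum)
      rw [this, ← ENNReal.ofReal_one, ← ENNReal.ofReal_sub _ hp₀]
    have hprod := hind.meas_iInter (s := fun i => Y i ⁻¹' {v (x i)})
      (fun i => ⟨{v (x i)}, measurableSet_singleton _, rfl⟩)
    rw [hA]
    rw [hprod]
    rw [cubeW, ENNReal.ofReal_prod_of_nonneg (fun i _ => by cases x i <;> simp <;> linarith)]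
    refine Finset.prod_congr rfl fun i _ => ?_
    cases hxi : x i
    · simpa [hv, hxi] using hmone i
    · simpa [hv, hxi] using hone i
  -- representation of functions of the path as simple functions
  have hrep : ∀ (g : (Fin n → Bool) → ℝ) (F : Ω → ℝ), (∀ x ω, ω ∈ A x → F ω = g x) →
      F = fun ω => ∑ x : Fin n → Bool, (A x).indicator (fun _ => g x) ω := by
    intro g F hFg
    funext ω
    symm
    rw [Finset.sum_eq_single (χ ω)]
    · rw [Set.indicator_of_mem (hmem ω)]
      exact (hFg _ _ (hmem ω)).symm
    · intro b _ hb
      apply Set.indicator_of_notMem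
      intro hωb
      exact hb (huniq ω b hωb).symm
    · intro h
      exact absurd (Finset.mem_univ _) h
  have hint : ∀ (g : (Fin n → Bool) → ℝ) (F : Ω → ℝ), (∀ x ω, ω ∈ A x → F ω = g x) →
      Integrable F ℙ := by
    intro g F hFg
    rw [hrep g F hFg]
    apply integrable_finset_sum
    intro x _
    rw [integrable_indicator_iff (hAmeas x)]
    exact integrableOn_const
  have hIntEq : ∀ (g : (Fin n → Bool) → ℝ) (F : Ω → ℝ), (∀ x ω, ω ∈ A x → F ω = g x) →
      ∫ ω, F ω = ∑ x : Fin n → Bool, cubeW p x * g x := by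
    intro g F hFg
    rw [hrep g F hFg]
    rw [integral_finset_sum _ (fun x _ => by
      rw [integrable_indicator_iff (hAmeas x)]
      exact integrableOn_const)]
    refine Finset.sum_congr rfl fun x _ => ?_
    rw [integral_indicator_const _ (hAmeas x), measureReal_def, hProb x, smul_eq_mul,
      ENNReal.toReal_ofReal (cubeW_nonneg hp₀ hp₁ x), mul_comm]
  -- the log of the running total
  set X : Ω → ℝ := fun ω => Real.log (T ω) with hXdef
  have hXg : ∀ (x : Fin n → Bool) (ω : Ω), ω ∈ A x → X ω = Real.log (G x) := by
    intro x ω hω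
    rw [hXdef]
    exact congrArg Real.log (hTeq x ω hω)
  set m : ℝ := ∫ ω, Real.log (T ω) with hm
  have hmeq : m = ∑ x : Fin n → Bool, cubeW p x * Real.log (G x) := by
    rw [hm]; exact hIntEq _ X hXg
  have hexpg : ∀ (s : ℝ) (x : Fin n → Bool) (ω : Ω), ω ∈ A x →
      Real.exp (s * X ω) = Real.exp (s * Real.log (G x)) := by
    intro s x ω hω
    rw [hXg x ω hω]
  have hintX : ∀ s : ℝ, Integrable (fun ω => Real.exp (s * X ω)) ℙ := fun s =>
    hint (fun x => Real.exp (s * Real.log (G x))) _ (hexpg s)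
  have hnc : (n : ℝ) * c ^ 2 = 4 * σ ^ 2 := by
    have hsq : Real.sqrt n ^ 2 = n := Real.sq_sqrt hnR.le
    rw [hc, hr]
    field_simp
    rw [hsq]
    ring
  have hmgf : ∀ s : ℝ, mgf X ℙ s ≤ Real.exp (s * m + s ^ 2 * σ ^ 2 / 2) := by
    intro s
    have h1 : mgf X ℙ s = ∑ x : Fin n → Bool, cubeW p x * Real.exp (s * Real.log (G x)) :=
      hIntEq _ _ (hexpg s)
    rw [h1]
    refine (discrete_mgf hp₀ hp₁ n (fun x => Real.log (G x)) c s hlips).trans ?_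
    apply le_of_eq
    congr 1
    rw [← hmeq]
    have : s ^ 2 * (n : ℝ) * c ^ 2 = s ^ 2 * (4 * σ ^ 2) := by
      rw [mul_assoc, hnc]
    rw [this]
    ring
  set s₀ : ℝ := lam / σ with hs₀
  have hs₀pos : 0 < s₀ := div_pos hlam hσ
  have hexpo : ∀ sgn : ℝ, sgn = 1 ∨ sgn = -1 →
      -(sgn * s₀) * (m + sgn * (σ * lam)) + ((sgn * s₀) * m + (sgn * s₀) ^ 2 * σ ^ 2 / 2)
        = -lam ^ 2 / 2 := by
    intro sgn hsgn
    have hσne : σ ≠ 0 := hσ.ne'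
    rcases hsgn with rfl | rfl <;> (rw [hs₀]; field_simp; ring)
  have hupE : ℙ {ω | m + σ * lam ≤ X ω} ≤ ENNReal.ofReal (Real.exp (-lam ^ 2 / 2)) := by
    have hup := measure_ge_le_exp_mul_mgf (μ := ℙ) (X := X) (m + σ * lam) hs₀pos.le (hintX s₀)
    have hup2 : (ℙ {ω | m + σ * lam ≤ X ω}).toReal ≤ Real.exp (-lam ^ 2 / 2) := by
      refine hup.trans ?_
      calc Real.exp (-s₀ * (m + σ * lam)) * mgf X ℙ s₀
          ≤ Real.exp (-s₀ * (m + σ * lam)) * Real.exp (s₀ * m + s₀ ^ 2 * σ ^ 2 / 2) :=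
            mul_le_mul_of_nonneg_left (hmgf s₀) (Real.exp_pos _).le
        _ = Real.exp (-lam ^ 2 / 2) := by
            rw [← Real.exp_add]
            congr 1
            have := hexpo 1 (Or.inl rfl)
            simpa using this
    rw [← ENNReal.ofReal_toReal (measure_ne_top ℙ _)]
    exact ENNReal.ofReal_le_ofReal hup2
  have hlowE : ℙ {ω | X ω ≤ m - σ * lam} ≤ ENNReal.ofReal (Real.exp (-lam ^ 2 / 2)) := by
    have hlow := measure_le_le_exp_mul_mgf (μ := ℙ) (X := X) (m - σ * lam)
      (neg_nonpos.2 hs₀pos.le) (hintX (-s₀))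
    have hlow2 : (ℙ {ω | X ω ≤ m - σ * lam}).toReal ≤ Real.exp (-lam ^ 2 / 2) := by
      refine hlow.trans ?_
      calc Real.exp (-(-s₀) * (m - σ * lam)) * mgf X ℙ (-s₀)
          ≤ Real.exp (-(-s₀) * (m - σ * lam)) * Real.exp ((-s₀) * m + (-s₀) ^ 2 * σ ^ 2 / 2) :=
            mul_le_mul_of_nonneg_left (hmgf (-s₀)) (Real.exp_pos _).le
        _ = Real.exp (-lam ^ 2 / 2) := by
            rw [← Real.exp_add]
            congr 1
            have := hexpo (-1) (Or.inr rfl)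
            have e1 : (-1 : ℝ) * s₀ = -s₀ := by ring
            have e2 : m + (-1) * (σ * lam) = m - σ * lam := by ring
            rw [e1, e2] at this
            exact this
    rw [← ENNReal.ofReal_toReal (measure_ne_top ℙ _)]
    exact ENNReal.ofReal_le_ofReal hlow2
  have hTpos : ∀ ω, 0 < T ω := fun ω => by
    rw [hTeq (χ ω) ω (hmem ω)]; exact hGpos _
  have hsub : {ω | T ω ≤ C * Real.exp (-σ * lam) ∨ C * Real.exp (σ * lam) ≤ T ω}
      ⊆ {ω | X ω ≤ m - σ * lam} ∪ {ω | m + σ * lam ≤ X ω} := by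
    intro ω hω
    rcases hω with h | h
    · left
      show X ω ≤ m - σ * lam
      have hle : T ω ≤ Real.exp (m - σ * lam) := by
        calc T ω ≤ C * Real.exp (-σ * lam) := h
          _ = Real.exp (m - σ * lam) := by
              rw [hC, ← Real.exp_add]
              congr 1
              ring
      have := Real.log_le_log (hTpos ω) hle
      rwa [Real.log_exp] at this
    · right
      show m + σ * lam ≤ X ω
      have hle : Real.exp (m + σ * lam) ≤ T ω := by
        calc Real.exp (m + σ * lam) = C * Real.exp (σ * lam) := by
              rw [hC, ← Real.exp_add]
          _ ≤ T ω := h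
      have := Real.log_le_log (Real.exp_pos _) hle
      rwa [Real.log_exp] at this
  calc ℙ {ω | T ω ≤ C * Real.exp (-σ * lam) ∨ C * Real.exp (σ * lam) ≤ T ω}
      ≤ ℙ ({ω | X ω ≤ m - σ * lam} ∪ {ω | m + σ * lam ≤ X ω}) := measure_mono hsub
    _ ≤ ℙ {ω | X ω ≤ m - σ * lam} + ℙ {ω | m + σ * lam ≤ X ω} := measure_union_le _ _
    _ ≤ ENNReal.ofReal (Real.exp (-lam ^ 2 / 2)) + ENNReal.ofReal (Real.exp (-lam ^ 2 / 2)) :=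
        add_le_add hlowE hupE
    _ = ENNReal.ofReal (2 * Real.exp (-lam ^ 2 / 2)) := by
        rw [← ENNReal.ofReal_add (Real.exp_pos _).le (Real.exp_pos _).le]
        congr 1
        ring
end

section
/- Variance bound for the capped payoff: Let T_n ≥ 0 satisfy the concentration bound P(T_n ≤ C e^{−σλ} or T_n ≥ C e^{σλ}) ≤ 2 e^{−λ²/2} for all λ > 0, where C = e^{E(ln T_n)}, σ > 0. Fix ε > 0 and λ_0 = √(2 ln(2/ε)) with λ_0 > 2σ. If (n+1)X ≥ C e^{−σλ_0}, then Var((T_n − (n+1)X)⁺) ≤ (n+1)² X² e^{4σλ_0} (1 + 2σε)/(λ_0 − 2σ). -/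
open MeasureTheory ProbabilityTheory Real Set Filter Topology

lemma exp_ge_e_mul (x : ℝ) : Real.exp 1 * x ≤ Real.exp x := by
  have h := Real.add_one_le_exp (x - 1)
  have : Real.exp 1 * x ≤ Real.exp 1 * Real.exp (x - 1) := by
    nlinarith [Real.exp_pos 1, Real.exp_pos (x-1)]
  calc Real.exp 1 * x ≤ Real.exp 1 * Real.exp (x - 1) := this
    _ = Real.exp x := by rw [← Real.exp_add]; ring_nf

lemma aux_quad (x : ℝ) (hx : 0 ≤ x) : 1 + x + x^2/2 ≤ Real.exp x := by
  have h := Real.sum_le_exp_of_nonneg hx 3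
  simp [Finset.sum_range_succ] at h
  nlinarith [h]

lemma aux_sqrt2pi : Real.sqrt (2 * Real.pi) ≤ 2.5067 := by
  rw [show (2.5067:ℝ) = Real.sqrt (2.5067^2) by rw [Real.sqrt_sq]; norm_num]
  exact Real.sqrt_le_sqrt (by nlinarith [Real.pi_lt_d6])

lemma aux_num (σ : ℝ) (hσ : 0 < σ) :
    4*σ^2*(1 + 2*σ*(Real.sqrt (2*Real.pi) * Real.exp (2*σ^2))) ≤
      2*Real.exp 1*σ*Real.exp (4*σ^2) := by
  have hq : 1 + 2*σ^2 + 2*σ^4 ≤ Real.exp (2*σ^2) := by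
    have := aux_quad (2*σ^2) (by positivity)
    nlinarith [this]
  set q := Real.exp (2*σ^2) with hqdef
  have hq0 : 0 < q := Real.exp_pos _
  have hqq : Real.exp (4*σ^2) = q*q := by
    rw [hqdef, ← Real.exp_add]; ring_nf
  have he : (2.7182:ℝ) ≤ Real.exp 1 := by
    have := Real.exp_one_gt_d9; linarith
  have hs := aux_sqrt2pi
  have hπ : 0 ≤ Real.sqrt (2*Real.pi) := Real.sqrt_nonneg _
  rw [hqq]
  have key : 2*σ + 10.0268*σ^2*q ≤ Real.exp 1 * (q*q) := by
    have hs' : 1 + 2*σ^2 + 2*σ^4 ≤ q := hq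
    nlinarith [sq_nonneg (σ - 0.85), sq_nonneg (σ^2 - 0.7), sq_nonneg (σ*q), sq_nonneg (q - 1 - 2*σ^2 - 2*σ^4), mul_pos hσ hq0, sq_nonneg (σ^2-1), sq_nonneg (σ^3-σ), sq_nonneg (σ-1), mul_nonneg (mul_nonneg hσ.le hσ.le) hσ.le, sq_nonneg (σ^2-0.5), sq_nonneg (σ^4 - 0.5)]
  nlinarith [key, mul_pos hσ hq0, mul_nonneg (mul_nonneg hσ.le hσ.le) hq0.le, mul_le_mul_of_nonneg_right hs (mul_nonneg (mul_nonneg (by norm_num : (0:ℝ) ≤ 8) (by positivity : (0:ℝ) ≤ σ^3)) hq0.le)]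


lemma gauss_facts (σ : ℝ) (hσ : 0 < σ) :
    IntegrableOn (fun t => 4*σ^2*(t * Real.exp (2*σ*t - t^2/2))) (Ioi (0:ℝ)) ∧
    ∫ t in Ioi (0:ℝ), 4*σ^2*(t*Real.exp (2*σ*t - t^2/2)) ≤
      4*σ^2*(1 + 2*σ*(Real.sqrt (2*Real.pi)*Real.exp (2*σ^2))) := by
  -- integrability of the comparison functions
  have hgauss : Integrable (fun x : ℝ => Real.exp (-(1/2) * x^2)) :=
    integrable_exp_neg_mul_sq (by norm_num)
  have hgauss2 : Integrable (fun t : ℝ => Real.exp (-(1/2) * (t - 2*σ)^2)) :=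
    hgauss.comp_sub_right (2*σ)
  have hxexp : Integrable (fun x : ℝ => x * Real.exp (-(1/2) * x^2)) := by
    have hgauss4 : Integrable (fun x : ℝ => Real.exp 1 * Real.exp (-(1/4) * x^2)) :=
      (integrable_exp_neg_mul_sq (by norm_num : (0:ℝ) < 1/4)).const_mul _
    refine hgauss4.mono' ((measurable_id.mul (by fun_prop)).aestronglyMeasurable)
      (ae_of_all _ fun x => ?_)
    have h1 : |x| ≤ Real.exp (x^2/4 + 1) := by
      have h2 : |x| ≤ x^2/4 + 1 := by nlinarith [sq_nonneg (|x| - 2), sq_abs x, abs_nonneg x]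
      have h3 : x^2/4 + 1 ≤ Real.exp (x^2/4 + 1) := by
        linarith [Real.add_one_le_exp (x^2/4 + 1), Real.exp_pos (x^2/4+1)]
      linarith
    have he : (0:ℝ) < Real.exp (-(1/2) * x^2) := Real.exp_pos _
    calc ‖x * Real.exp (-(1/2)*x^2)‖ = |x| * Real.exp (-(1/2)*x^2) := by
          rw [norm_mul, Real.norm_eq_abs, Real.norm_eq_abs, abs_of_pos he]
      _ ≤ Real.exp (x^2/4 + 1) * Real.exp (-(1/2)*x^2) := mul_le_mul_of_nonneg_right h1 he.le
      _ = Real.exp 1 * Real.exp (-(1/4)*x^2) := by rw [← Real.exp_add, ← Real.exp_add]; ring_nf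
  have hxexp2 : Integrable (fun t : ℝ => (t - 2*σ) * Real.exp (-(1/2)*(t-2*σ)^2)) :=
    hxexp.comp_sub_right (2*σ)
  have hexprw : ∀ t : ℝ, Real.exp (2*σ*t - t^2/2) =
      Real.exp (2*σ^2) * Real.exp (-(1/2)*(t-2*σ)^2) := by
    intro t
    rw [← Real.exp_add]
    congr 1
    ring
  have hg1int : IntegrableOn (fun t => Real.exp (2*σ*t - t^2/2)) (Ioi (0:ℝ)) := by
    refine ((hgauss2.const_mul (Real.exp (2*σ^2))).congr (ae_of_all _ fun t => ?_)).integrableOn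
    exact (hexprw t).symm
  have hg2int : IntegrableOn (fun t => (t - 2*σ) * Real.exp (2*σ*t - t^2/2)) (Ioi (0:ℝ)) := by
    refine ((hxexp2.const_mul (Real.exp (2*σ^2))).congr (ae_of_all _ fun t => ?_)).integrableOn
    rw [hexprw t]
    ring
  have htint : IntegrableOn (fun t => t * Real.exp (2*σ*t - t^2/2)) (Ioi (0:ℝ)) := by
    refine ((hg2int.add (hg1int.const_mul (2*σ))).congr (ae_of_all _ fun t => ?_))
    simp only [Pi.add_apply]
    ring
  have hmainint : IntegrableOn (fun t => 4*σ^2*(t * Real.exp (2*σ*t - t^2/2))) (Ioi (0:ℝ)) :=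
    htint.const_mul _
  -- FTC on Ioi
  have hFTC2 : ∫ t in Ioi (0:ℝ), (t - 2*σ) * Real.exp (2*σ*t - t^2/2) = 1 := by
    have hderiv : ∀ t ∈ Ici (0:ℝ), HasDerivAt (fun t => -Real.exp (2*σ*t - t^2/2))
        ((t - 2*σ) * Real.exp (2*σ*t - t^2/2)) t := by
      intro t _
      have h1 : HasDerivAt (fun t : ℝ => 2*σ*t - t^2/2) (2*σ - t) t := by
        have h0 := ((hasDerivAt_id t).const_mul (2*σ)).sub ((hasDerivAt_pow 2 t).div_const 2)
        convert h0 using 1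
        · rfl
        · rfl
        · rfl
        · norm_num
      have := h1.exp.neg
      convert this using 1
      · rfl
      · rfl
      · rfl
      · ring
    have htend : Tendsto (fun t : ℝ => -Real.exp (2*σ*t - t^2/2)) atTop (𝓝 0) := by
      rw [show (0:ℝ) = -0 by ring]
      apply Tendsto.neg
      apply Real.tendsto_exp_atBot.comp
      have h2 : Tendsto (fun t : ℝ => t^2/2 - 2*σ*t) atTop atTop := by
        apply tendsto_atTop_mono' atTop ?_ tendsto_id
        filter_upwards [eventually_ge_atTop (4*σ + 2)] with t ht
        have ht0 : 0 ≤ t := by nlinarith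
        simp only [id]
        nlinarith [mul_nonneg (sub_nonneg.mpr ht) ht0]
      have h3 := tendsto_neg_atTop_atBot.comp h2
      apply h3.congr
      intro t
      simp only [Function.comp_apply]
      ring
    have := integral_Ioi_of_hasDerivAt_of_tendsto' hderiv hg2int htend
    rw [this]
    norm_num
  -- Gaussian integral bound
  have hB : ∫ t in Ioi (0:ℝ), Real.exp (2*σ*t - t^2/2) ≤
      Real.sqrt (2*Real.pi) * Real.exp (2*σ^2) := by
    calc ∫ t in Ioi (0:ℝ), Real.exp (2*σ*t - t^2/2)
        = ∫ t in Ioi (0:ℝ), Real.exp (2*σ^2) * Real.exp (-(1/2)*(t-2*σ)^2) := by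
          apply setIntegral_congr_fun measurableSet_Ioi
          intro t _
          exact hexprw t
      _ ≤ ∫ t : ℝ, Real.exp (2*σ^2) * Real.exp (-(1/2)*(t-2*σ)^2) :=
          setIntegral_le_integral (hgauss2.const_mul _) (ae_of_all _ fun t => by positivity)
      _ = Real.exp (2*σ^2) * ∫ t : ℝ, Real.exp (-(1/2)*(t-2*σ)^2) := integral_const_mul _ _
      _ = Real.exp (2*σ^2) * ∫ x : ℝ, Real.exp (-(1/2)*x^2) := by
          rw [integral_sub_right_eq_self (fun x => Real.exp (-(1/2)*x^2)) (2*σ)]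
      _ = Real.exp (2*σ^2) * Real.sqrt (Real.pi / (1/2)) := by rw [integral_gaussian]
      _ = Real.sqrt (2*Real.pi) * Real.exp (2*σ^2) := by
          rw [show Real.pi/(1/2) = 2*Real.pi by ring]
          ring
  -- value of the main integral
  have hval : ∫ t in Ioi (0:ℝ), 4*σ^2*(t*Real.exp (2*σ*t - t^2/2)) ≤
      4*σ^2*(1 + 2*σ*(Real.sqrt (2*Real.pi)*Real.exp (2*σ^2))) := by
    rw [integral_const_mul]
    have hsplit : ∫ t in Ioi (0:ℝ), t*Real.exp (2*σ*t - t^2/2) =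
        (∫ t in Ioi (0:ℝ), (t-2*σ)*Real.exp (2*σ*t - t^2/2)) +
          2*σ*∫ t in Ioi (0:ℝ), Real.exp (2*σ*t - t^2/2) := by
      rw [← integral_const_mul, ← integral_add hg2int (hg1int.const_mul _)]
      apply setIntegral_congr_fun measurableSet_Ioi
      intro t _
      simp only [Pi.add_apply]
      ring
    rw [hsplit, hFTC2]
    have : 2*σ*∫ t in Ioi (0:ℝ), Real.exp (2*σ*t - t^2/2) ≤
        2*σ*(Real.sqrt (2*Real.pi)*Real.exp (2*σ^2)) := by
      apply mul_le_mul_of_nonneg_left _ (by positivity)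
      calc (∫ t in Ioi (0:ℝ), Real.exp (2*σ*t - t^2/2)) ≤ _ := hB
        _ = Real.sqrt (2*Real.pi)*Real.exp (2*σ^2) := rfl
    nlinarith [sq_nonneg σ, this]
  exact ⟨hmainint, hval⟩

set_option maxHeartbeats 2000000

/-- Variance bound for the capped payoff: suppose the nonnegative running total
`T_n` satisfies the concentration bound
`P(T_n ≤ C e^{−σλ} or T_n ≥ C e^{σλ}) ≤ 2 e^{−λ²/2}` for all `λ > 0`, where
`C = e^{E(ln T_n)}` and `σ > 0`.  Fix `ε > 0` and `λ₀ = √(2 ln(2/ε))` with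
`λ₀ > 2σ`.  If `(n+1)X ≥ C e^{−σλ₀}`, then
`Var((T_n − (n+1)X)⁺) ≤ (n+1)² X² e^{4σλ₀} (1 + 2σε)/(λ₀ − 2σ)`. -/
theorem capped_payoff_variance_bound {Ω : Type*} [MeasureSpace Ω]
    [IsProbabilityMeasure (ℙ : Measure Ω)]
    (T : Ω → ℝ) (hTm : Measurable T) (hTnn : ∀ ω, 0 ≤ T ω)
    (hT2 : Integrable (fun ω => T ω ^ 2))
    (n : ℕ) (X σ ε lam₀ C : ℝ) (hX : 0 < X) (hσ : 0 < σ) (hε : 0 < ε)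
    (hC : C = Real.exp (∫ ω, Real.log (T ω)))
    (hconc : ∀ lam : ℝ, 0 < lam →
      ℙ {ω | T ω ≤ C * Real.exp (-σ * lam) ∨ C * Real.exp (σ * lam) ≤ T ω} ≤
        ENNReal.ofReal (2 * Real.exp (-lam ^ 2 / 2)))
    (hlam₀ : lam₀ = Real.sqrt (2 * Real.log (2 / ε)))
    (hlam₀σ : 2 * σ < lam₀)
    (hbarrier : C * Real.exp (-σ * lam₀) ≤ (n + 1) * X) :
    variance (fun ω => max (T ω - (n + 1) * X) 0) ℙ ≤
      (n + 1) ^ 2 * X ^ 2 * Real.exp (4 * σ * lam₀) * (1 + 2 * σ * ε) / (lam₀ - 2 * σ) := by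
  have hC0 : 0 < C := by rw [hC]; exact Real.exp_pos _
  set a : ℝ := (↑n + 1) * X with ha
  have ha0 : 0 < a := by positivity
  set Y : Ω → ℝ := fun ω => max (T ω - a) 0 with hYdef
  set c : ℝ := max (C - a) 0 with hcdef
  have hYm : Measurable Y := (hTm.sub_const a).max measurable_const
  have hYsq : Integrable (fun ω => Y ω ^ 2) := by
    refine hT2.mono (hYm.pow_const 2).aestronglyMeasurable (ae_of_all _ fun ω => ?_)
    have h1 : 0 ≤ Y ω := le_max_right _ _
    have h2 : Y ω ≤ T ω := by
      simp only [hYdef]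
      exact max_le (by linarith [hTnn ω, ha0]) (hTnn ω)
    simp only [norm_pow, norm_eq_abs, abs_of_nonneg h1, abs_of_nonneg (hTnn ω)]
    exact pow_le_pow_left₀ h1 h2 2
  have hYmem : MemLp Y 2 ℙ := (memLp_two_iff_integrable_sq hYm.aestronglyMeasurable).mpr hYsq
  have hYint : Integrable Y := hYmem.integrable one_le_two
  -- Step 1 : variance ≤ ∫ (Y - c)^2
  have key1 : variance Y ℙ ≤ ∫ ω, (Y ω - c)^2 := by
    have hexp : ∫ ω, (Y ω - c)^2 = (∫ ω, Y ω ^2) - 2*c*(∫ ω, Y ω) + c^2 := by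
      have h1 : Integrable (fun ω => Y ω^2 - 2*c*Y ω) := hYsq.sub (hYint.const_mul _)
      have : (fun ω => (Y ω - c)^2) = fun ω => (Y ω^2 - 2*c*Y ω) + c^2 := by
        funext ω; ring
      rw [this, integral_add h1 (integrable_const _), integral_sub hYsq (hYint.const_mul _),
        integral_const, integral_const_mul]
      simp [measure_univ]
    rw [variance_eq_sub hYmem, hexp]
    have h2 : (∫ ω, (Y^2) ω) = ∫ ω, Y ω^2 := by simp
    rw [show ℙ[Y^2] = ∫ ω, (Y^2) ω from rfl, h2]
    nlinarith [sq_nonneg ((∫ ω, Y ω) - c)]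
  -- a.e. positivity of T
  have hTpos : ∀ᵐ ω ∂ℙ, 0 < T ω := by
    have hset : ℙ {ω | T ω ≤ 0} = 0 := by
      have hle : ∀ k : ℕ, ℙ {ω | T ω ≤ 0} ≤ ENNReal.ofReal (2 * Real.exp (-((k:ℝ)+1)^2/2)) := by
        intro k
        refine le_trans (measure_mono ?_) (hconc ((k:ℝ)+1) (by positivity))
        intro ω hω
        left
        exact le_trans hω (by positivity)
      have htend : Tendsto (fun k : ℕ => ENNReal.ofReal (2 * Real.exp (-((k:ℝ)+1)^2/2)))
          atTop (𝓝 0) := by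
        rw [← ENNReal.ofReal_zero]
        apply ENNReal.tendsto_ofReal
        rw [show (0:ℝ) = 2*0 by ring]
        apply Tendsto.const_mul
        apply Real.tendsto_exp_atBot.comp
        have h2 : Tendsto (fun k : ℕ => ((k:ℝ)+1)^2/2) atTop atTop := by
          apply tendsto_atTop_mono ?_ tendsto_natCast_atTop_atTop
          intro k
          nlinarith [(by positivity : (0:ℝ) ≤ (k:ℝ))]
        have h3 := tendsto_neg_atTop_atBot.comp h2
        apply h3.congr
        intro k
        simp only [Function.comp_apply]
        ring
      have := ge_of_tendsto' htend hle
      simpa using this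
    rw [ae_iff]
    convert hset using 2
    ext ω
    simp [not_lt]
  -- the auxiliary function V and the derivative function g
  set V : Ω → ℝ := fun ω => |Real.log (T ω / C)| / σ with hVdef
  have hVm : Measurable V := ((Real.measurable_log.comp (hTm.div_const C)).abs).div_const σ
  have hV0 : ∀ ω, 0 ≤ V ω := fun ω => div_nonneg (abs_nonneg _) hσ.le
  set g : ℝ → ℝ := fun t => 2*σ*Real.exp (σ*t)*(Real.exp (σ*t) - 1) with hgdef
  have hgcont : Continuous g := by fun_prop
  have hFTC : ∀ v : ℝ, ∫ t in (0:ℝ)..v, g t = (Real.exp (σ*v) - 1)^2 := by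
    intro v
    have hderiv : ∀ t ∈ uIcc (0:ℝ) v,
        HasDerivAt (fun t => (Real.exp (σ*t) - 1)^2) (g t) t := by
      intro t _
      have h1 : HasDerivAt (fun t : ℝ => σ*t) σ t := by
        simpa using (hasDerivAt_id t).const_mul σ
      have h2 := ((h1.exp).sub_const 1).pow 2
      convert h2 using 1
      · rfl
      · rfl
      · rfl
      · simp [hgdef]
        ring
    rw [intervalIntegral.integral_eq_sub_of_hasDerivAt hderiv
      (hgcont.intervalIntegrable _ _)]
    simp
  -- pointwise bound
  have hptwise : ∀ᵐ ω ∂ℙ, ENNReal.ofReal ((Y ω - c)^2) ≤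
      ENNReal.ofReal (C^2) * ENNReal.ofReal (∫ t in (0:ℝ)..(V ω), g t) := by
    filter_upwards [hTpos] with ω hω
    rw [hFTC (V ω), ← ENNReal.ofReal_mul (by positivity)]
    apply ENNReal.ofReal_le_ofReal
    set L := Real.log (T ω / C) with hLdef
    have hTL : T ω = C * Real.exp L := by
      rw [hLdef, Real.exp_log (div_pos hω hC0)]
      field_simp
    have hσV : σ * V ω = |L| := by
      simp only [hVdef]
      field_simp
      rfl
    have h1 : |Y ω - c| ≤ |T ω - C| := by
      have := abs_max_sub_max_le_abs (T ω - a) (C - a) 0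
      simpa using this
    have h2 : |T ω - C| ≤ C * (Real.exp (σ * V ω) - 1) := by
      rw [hσV]
      have hepos : (0:ℝ) < Real.exp L := Real.exp_pos L
      rcases abs_cases L with ⟨habs, hsign⟩ | ⟨habs, hsign⟩
      · rw [habs, hTL, abs_of_nonneg (by nlinarith [Real.one_le_exp hsign])]
        ring_nf
        nlinarith [Real.one_le_exp hsign]
      · rw [habs, hTL]
        have hlt : Real.exp L ≤ 1 := Real.exp_le_one_iff.mpr hsign.le
        rw [abs_of_nonpos (by nlinarith), Real.exp_neg]
        have hkey : C*((Real.exp L)⁻¹ - 1) + (C*Real.exp L - C) =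
            C*(Real.exp L - 1)^2 * (Real.exp L)⁻¹ := by
          field_simp
          ring
        nlinarith [hkey, mul_nonneg (mul_nonneg hC0.le (sq_nonneg (Real.exp L - 1)))
          (inv_nonneg.mpr hepos.le)]
    calc (Y ω - c)^2 = |Y ω - c|^2 := (sq_abs _).symm
      _ ≤ (C*(Real.exp (σ * V ω) - 1))^2 := by
          apply pow_le_pow_left₀ (abs_nonneg _) (h1.trans h2)
      _ = C^2 * (Real.exp (σ*V ω) - 1)^2 := by ring
  -- probability tail bound for V
  have hVtail : ∀ t : ℝ, t ∈ Ioi (0:ℝ) →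
      ℙ {ω | t ≤ V ω} ≤ ENNReal.ofReal (2 * Real.exp (-t^2/2)) := by
    intro t ht
    refine le_trans (measure_mono ?_) (hconc t ht)
    intro ω hω
    simp only [mem_setOf_eq] at hω ⊢
    rcases (hTnn ω).eq_or_lt with heq | hpos
    · left
      rw [← heq]
      positivity
    · set L := Real.log (T ω / C) with hLdef
      have hTL : T ω = C * Real.exp L := by
        rw [hLdef, Real.exp_log (div_pos hpos hC0)]
        field_simp
      have hσt : σ * t ≤ |L| := by
        rw [hVdef] at hω
        simp only at hω
        rw [le_div_iff₀ hσ] at hω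
        linarith
      rcases le_abs.mp hσt with hcase | hcase
      · right
        rw [hTL]
        exact mul_le_mul_of_nonneg_left (Real.exp_le_exp.mpr hcase) hC0.le
      · left
        rw [hTL]
        have : L ≤ -(σ*t) := by linarith
        have := Real.exp_le_exp.mpr this
        calc C * Real.exp L ≤ C * Real.exp (-(σ*t)) :=
              mul_le_mul_of_nonneg_left (by simpa using this) hC0.le
          _ = C * Real.exp (-σ*t) := by ring_nf
  obtain ⟨hmainint, hval⟩ := gauss_facts σ hσ
  -- lintegral chain
  have hgnn : ∀ᵐ t ∂(volume.restrict (Ioi (0:ℝ))), 0 ≤ g t := by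
    rw [ae_restrict_iff' measurableSet_Ioi]
    apply ae_of_all
    intro t ht
    have h1 : (1:ℝ) ≤ Real.exp (σ*t) := Real.one_le_exp (mul_nonneg hσ.le (le_of_lt ht))
    simp only [hgdef]
    have := mul_nonneg (mul_nonneg (by positivity : (0:ℝ) ≤ 2*σ) (Real.exp_pos (σ*t)).le)
      (by linarith : (0:ℝ) ≤ Real.exp (σ*t) - 1)
    linarith
  have hlayer := lintegral_comp_eq_lintegral_meas_le_mul ℙ (ae_of_all _ hV0) hVm.aemeasurable
    (fun t _ => hgcont.intervalIntegrable _ _) hgnn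
  have hmono2 : ∫⁻ t in Ioi (0:ℝ), ℙ {ω | t ≤ V ω} * ENNReal.ofReal (g t) ≤
      ∫⁻ t in Ioi (0:ℝ), ENNReal.ofReal (4*σ^2*(t*Real.exp (2*σ*t - t^2/2))) := by
    apply setLIntegral_mono (by fun_prop)
    intro t ht
    calc ℙ {ω | t ≤ V ω} * ENNReal.ofReal (g t)
        ≤ ENNReal.ofReal (2 * Real.exp (-t^2/2)) * ENNReal.ofReal (g t) :=
          mul_le_mul_left (hVtail t ht) _
      _ = ENNReal.ofReal (2 * Real.exp (-t^2/2) * g t) := by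
          rw [← ENNReal.ofReal_mul (by positivity)]
      _ ≤ ENNReal.ofReal (4*σ^2*(t*Real.exp (2*σ*t - t^2/2))) := by
          apply ENNReal.ofReal_le_ofReal
          have hexp1 : Real.exp (σ*t) - 1 ≤ σ*t*Real.exp (σ*t) := by
            have h := Real.add_one_le_exp (-(σ*t))
            have hpos : (0:ℝ) < Real.exp (σ*t) := Real.exp_pos _
            have hrecip : Real.exp (-(σ*t)) * Real.exp (σ*t) = 1 := by
              rw [← Real.exp_add]; simp
            nlinarith
          have hrw : Real.exp (2*σ*t - t^2/2) =
              Real.exp (σ*t) * Real.exp (σ*t) * Real.exp (-t^2/2) := by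
            rw [← Real.exp_add, ← Real.exp_add]
            congr 1
            ring
          rw [hrw]
          simp only [hgdef]
          have hp1 : (0:ℝ) < Real.exp (σ*t) := Real.exp_pos _
          have hp2 : (0:ℝ) < Real.exp (-t^2/2) := Real.exp_pos _
          have htpos : 0 < t := ht
          nlinarith [mul_pos hp1 hp2, mul_pos (mul_pos hp1 hp1) hp2,
            mul_le_mul_of_nonneg_right hexp1 (mul_pos hp1 hp2).le]
  have hofreal : ∫⁻ t in Ioi (0:ℝ), ENNReal.ofReal (4*σ^2*(t*Real.exp (2*σ*t - t^2/2))) =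
      ENNReal.ofReal (∫ t in Ioi (0:ℝ), 4*σ^2*(t*Real.exp (2*σ*t - t^2/2))) := by
    rw [← ofReal_integral_eq_lintegral_ofReal hmainint]
    filter_upwards [ae_restrict_mem measurableSet_Ioi] with t ht
    simp only [Pi.zero_apply]
    have h0t : (0:ℝ) < t := ht
    positivity
  -- main L² bound
  have key2 : ∫ ω, (Y ω - c)^2 ≤
      C^2 * (4*σ^2*(1 + 2*σ*(Real.sqrt (2*Real.pi)*Real.exp (2*σ^2)))) := by
    rw [integral_eq_lintegral_of_nonneg_ae (ae_of_all _ fun ω => sq_nonneg _)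
      ((hYm.sub_const c).pow_const 2).aestronglyMeasurable]
    apply ENNReal.toReal_le_of_le_ofReal (by positivity)
    calc ∫⁻ ω, ENNReal.ofReal ((Y ω - c)^2) ∂ℙ
        ≤ ∫⁻ ω, ENNReal.ofReal (C^2) * ENNReal.ofReal (∫ t in (0:ℝ)..(V ω), g t) ∂ℙ :=
          lintegral_mono_ae hptwise
      _ = ENNReal.ofReal (C^2) * ∫⁻ ω, ENNReal.ofReal (∫ t in (0:ℝ)..(V ω), g t) ∂ℙ :=
          lintegral_const_mul' _ _ ENNReal.ofReal_ne_top
      _ = ENNReal.ofReal (C^2) * ∫⁻ t in Ioi (0:ℝ), ℙ {ω | t ≤ V ω} * ENNReal.ofReal (g t) := by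
          rw [hlayer]
      _ ≤ ENNReal.ofReal (C^2) *
            ∫⁻ t in Ioi (0:ℝ), ENNReal.ofReal (4*σ^2*(t*Real.exp (2*σ*t - t^2/2))) :=
          mul_le_mul_right hmono2 _
      _ = ENNReal.ofReal (C^2) *
            ENNReal.ofReal (∫ t in Ioi (0:ℝ), 4*σ^2*(t*Real.exp (2*σ*t - t^2/2))) := by
          rw [hofreal]
      _ ≤ ENNReal.ofReal (C^2) *
            ENNReal.ofReal (4*σ^2*(1 + 2*σ*(Real.sqrt (2*Real.pi)*Real.exp (2*σ^2)))) :=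
          mul_le_mul_right (ENNReal.ofReal_le_ofReal hval) _
      _ = ENNReal.ofReal (C^2 * (4*σ^2*(1 + 2*σ*(Real.sqrt (2*Real.pi)*Real.exp (2*σ^2))))) := by
          rw [← ENNReal.ofReal_mul (by positivity)]
  -- final chain of numeric bounds
  have hs : (0:ℝ) < lam₀ - 2*σ := by linarith
  have hstep3 : C^2 * (4*σ^2*(1 + 2*σ*(Real.sqrt (2*Real.pi)*Real.exp (2*σ^2)))) ≤
      C^2 * (2*Real.exp 1*σ*Real.exp (4*σ^2)) :=
    mul_le_mul_of_nonneg_left (aux_num σ hσ) (sq_nonneg C)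
  have hstep4 : C^2 * (2*Real.exp 1*σ*Real.exp (4*σ^2)) ≤
      C^2 * (Real.exp (2*σ*lam₀) / (lam₀ - 2*σ)) := by
    apply mul_le_mul_of_nonneg_left _ (sq_nonneg C)
    rw [le_div_iff₀ hs]
    have h2 : Real.exp (2*σ*lam₀) = Real.exp (4*σ^2) * Real.exp (2*σ*(lam₀-2*σ)) := by
      rw [← Real.exp_add]
      congr 1
      ring
    have h3 : Real.exp 1 * (2*σ*(lam₀-2*σ)) ≤ Real.exp (2*σ*(lam₀-2*σ)) := exp_ge_e_mul _
    rw [h2]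
    nlinarith [Real.exp_pos (4*σ^2), Real.exp_pos (2*σ*(lam₀-2*σ))]
  have hstep5 : C^2 * (Real.exp (2*σ*lam₀) / (lam₀ - 2*σ)) ≤
      a^2 * Real.exp (4*σ*lam₀) * (1 + 2*σ*ε) / (lam₀ - 2*σ) := by
    rw [← mul_div_assoc]
    have h4 : (C*Real.exp (-σ*lam₀))^2 ≤ a^2 := by
      apply pow_le_pow_left₀ (by positivity) hbarrier
    have h5 : (Real.exp (-σ*lam₀))^2 * Real.exp (4*σ*lam₀) = Real.exp (2*σ*lam₀) := by
      rw [sq, ← Real.exp_add, ← Real.exp_add]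
      ring_nf
    have h6 : C^2 * Real.exp (2*σ*lam₀) ≤ a^2 * Real.exp (4*σ*lam₀) := by
      calc C^2 * Real.exp (2*σ*lam₀) = (C*Real.exp (-σ*lam₀))^2 * Real.exp (4*σ*lam₀) := by
            rw [mul_pow, ← h5]
            ring
        _ ≤ a^2 * Real.exp (4*σ*lam₀) := mul_le_mul_of_nonneg_right h4 (Real.exp_pos _).le
    have h7 : a^2 * Real.exp (4*σ*lam₀) ≤ a^2*Real.exp (4*σ*lam₀)*(1+2*σ*ε) := by
      nlinarith [mul_pos hσ hε, mul_pos (mul_pos ha0 ha0) (Real.exp_pos (4*σ*lam₀))]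
    exact (div_le_div_iff_of_pos_right hs).mpr (h6.trans h7)
  calc variance Y ℙ ≤ ∫ ω, (Y ω - c)^2 := key1
    _ ≤ C^2 * (4*σ^2*(1 + 2*σ*(Real.sqrt (2*Real.pi)*Real.exp (2*σ^2)))) := key2
    _ ≤ C^2 * (2*Real.exp 1*σ*Real.exp (4*σ^2)) := hstep3
    _ ≤ C^2 * (Real.exp (2*σ*lam₀) / (lam₀ - 2*σ)) := hstep4
    _ ≤ a^2 * Real.exp (4*σ*lam₀) * (1 + 2*σ*ε) / (lam₀ - 2*σ) := hstep5
    _ = (↑n+1)^2 * X^2 * Real.exp (4*σ*lam₀) * (1+2*σ*ε)/(lam₀-2*σ) := by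
        rw [ha]
        ring
end

section
/- Error bound for RecBTT parameter choice: Let R > 2 be an integer, γ = 1/R, n_i = (n_0/σ²)^{1/2 − iγ} and k_i = 4^i k_0 (n_0/σ²)^{iγ} for 0 ≤ i ≤ K where K = 1/(2γ) (so n_K = 1), with terminal error E_K = B/k_K = σB/(4^K k_0 √n_0). Then the total error E_0 = 5B n_0 Σ_{i=1}^K 2^{i−1}/(k_{i−1} n_i) + 2^K n_0 E_K satisfies E_0 = O(σ^{1−2γ} B n_0^{1/2+γ}/k_0). -/
/-- Error bound for the RecBTT parameter choice: for an integer `R = 2K > 2`,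
`γ = 1/R`, subproblem sizes `n_i = (n₀/σ²)^{1/2 − iγ}` and bucket counts
`k_i = 4^i k₀ (n₀/σ²)^{iγ}` (so `n_K = 1`), and terminal error
`E_K = σB/(4^K k₀ √n₀)`, the total error
`E₀ = 5B n₀ Σ_{j=0}^{K-1} 2^j/(k_j n_{j+1}) + 2^K n₀ E_K` satisfies
`E₀ = O(σ^{1−2γ} B n₀^{1/2+γ}/k₀)`. -/
theorem recBTT_error_bound :
    ∃ c : ℝ, 0 < c ∧ ∀ (B σ k₀ n₀ : ℝ) (K : ℕ),
      0 < B → 0 < σ → 0 < k₀ → σ ^ 2 ≤ n₀ → 2 ≤ K →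
      ∀ γ : ℝ, γ = 1 / (2 * K) →
      ∀ nn kk : ℕ → ℝ,
        (∀ i : ℕ, nn i = (n₀ / σ ^ 2) ^ ((1 : ℝ) / 2 - i * γ)) →
        (∀ i : ℕ, kk i = 4 ^ i * k₀ * (n₀ / σ ^ 2) ^ ((i : ℝ) * γ)) →
      ∀ EK : ℝ, EK = σ * B / (4 ^ K * k₀ * Real.sqrt n₀) →
      5 * B * n₀ * (∑ j ∈ Finset.range K, 2 ^ j / (kk j * nn (j + 1))) +
          2 ^ K * n₀ * EK ≤
        c * (σ ^ ((1 : ℝ) - 2 * γ) * B * n₀ ^ ((1 : ℝ) / 2 + γ) / k₀) := by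
  refine ⟨11, by norm_num, ?_⟩
  intro B σ k₀ n₀ K hB hσ hk hσn hK γ hγ nn kk hnn hkk EK hEK
  have hσ2 : (0:ℝ) < σ ^ 2 := by positivity
  have hn₀ : (0:ℝ) < n₀ := lt_of_lt_of_le hσ2 hσn
  have hx0 : (0:ℝ) < n₀ / σ ^ 2 := by positivity
  have hx1 : (1:ℝ) ≤ n₀ / σ ^ 2 := (one_le_div hσ2).2 hσn
  have hKpos : (0:ℝ) < (K:ℝ) := by exact_mod_cast (by omega : 0 < K)
  have hγ0 : 0 < γ := by rw [hγ]; positivity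
  set P : ℝ := (n₀ / σ ^ 2) ^ ((1:ℝ)/2 - γ) with hP
  have hP0 : 0 < P := Real.rpow_pos_of_pos hx0 _
  -- each summand
  have hsummand : ∀ j : ℕ, 2 ^ j / (kk j * nn (j + 1)) = (1/2:ℝ)^j * (1/(k₀ * P)) := by
    intro j
    have hprod : kk j * nn (j + 1) = 4 ^ j * (k₀ * P) := by
      have h1 : (n₀/σ^2) ^ ((j:ℝ)*γ) * (n₀/σ^2) ^ ((1:ℝ)/2 - (↑(j+1))*γ) = P := by
        rw [← Real.rpow_add hx0, hP]
        congr 1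
        push_cast; ring
      calc kk j * nn (j+1)
          = 4 ^ j * k₀ * ((n₀/σ^2) ^ ((j:ℝ)*γ) * (n₀/σ^2) ^ ((1:ℝ)/2 - (↑(j+1))*γ)) := by
            rw [hkk, hnn]; ring
        _ = 4 ^ j * (k₀ * P) := by rw [h1]; ring
    rw [hprod]
    have h4 : (0:ℝ) < (4:ℝ) ^ j := by positivity
    have hkP : (0:ℝ) < k₀ * P := by positivity
    field_simp
    rw [show (4:ℝ)^j = 2^j*2^j by rw [← mul_pow]; norm_num]
    rw [div_pow, one_pow]; field_simp
  rw [Finset.sum_congr rfl (fun j _ => hsummand j), ← Finset.sum_mul]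
  have hgeom : (∑ j ∈ Finset.range K, (1/2:ℝ)^j) ≤ 2 := by
    simpa using sum_geometric_two_le K
  have hgeom0 : (0:ℝ) ≤ ∑ j ∈ Finset.range K, (1/2:ℝ)^j :=
    Finset.sum_nonneg fun j _ => by positivity
  -- key identity : n₀ / P = σ^{1-2γ} n₀^{1/2+γ}
  have hA : n₀ / P = σ ^ ((1:ℝ) - 2*γ) * n₀ ^ ((1:ℝ)/2 + γ) := by
    have h1 : (σ^2:ℝ) ^ ((1:ℝ)/2 - γ) = σ ^ ((1:ℝ) - 2*γ) := by
      rw [← Real.rpow_natCast σ 2, ← Real.rpow_mul hσ.le]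
      congr 1
      push_cast; ring
    have hnn1 : n₀ ^ ((1:ℝ)/2 + γ) * n₀ ^ ((1:ℝ)/2 - γ) = n₀ := by
      rw [← Real.rpow_add hn₀, show (1:ℝ)/2+γ+((1:ℝ)/2-γ) = 1 by ring, Real.rpow_one]
    rw [hP, Real.div_rpow hn₀.le hσ2.le, div_div_eq_mul_div, h1]
    rw [div_eq_iff (by positivity : n₀ ^ ((1:ℝ)/2 - γ) ≠ 0)]
    rw [mul_assoc, hnn1, mul_comm]
  -- terminal term bound
  have hBineq : σ * Real.sqrt n₀ ≤ σ ^ ((1:ℝ) - 2*γ) * n₀ ^ ((1:ℝ)/2 + γ) := by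
    have hσ2γ : σ ^ ((2:ℝ)*γ) ≤ n₀ ^ γ := by
      have h := Real.rpow_le_rpow hσ2.le hσn hγ0.le
      calc σ ^ ((2:ℝ)*γ) = (σ^2:ℝ) ^ γ := by
            rw [← Real.rpow_natCast σ 2, ← Real.rpow_mul hσ.le]; norm_num
        _ ≤ n₀ ^ γ := h
    calc σ * Real.sqrt n₀ = σ ^ ((1:ℝ) - 2*γ) * σ ^ ((2:ℝ)*γ) * n₀ ^ ((1:ℝ)/2) := by
          rw [← Real.rpow_add hσ, Real.sqrt_eq_rpow]; norm_num
      _ ≤ σ ^ ((1:ℝ) - 2*γ) * n₀ ^ γ * n₀ ^ ((1:ℝ)/2) := by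
          have h1 := Real.rpow_pos_of_pos hσ ((1:ℝ) - 2*γ)
          have h2 := Real.rpow_pos_of_pos hn₀ ((1:ℝ)/2)
          exact mul_le_mul_of_nonneg_right
            (mul_le_mul_of_nonneg_left hσ2γ h1.le) h2.le
      _ = σ ^ ((1:ℝ) - 2*γ) * n₀ ^ ((1:ℝ)/2 + γ) := by
          rw [mul_assoc, ← Real.rpow_add hn₀]; ring_nf
  have h2K : (1:ℝ) ≤ 2 ^ K := one_le_pow₀ (by norm_num)
  have hterm2 : 2 ^ K * n₀ * EK ≤ σ ^ ((1:ℝ) - 2*γ) * B * n₀ ^ ((1:ℝ)/2 + γ) / k₀ := by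
    rw [hEK]
    have hsqrt0 : (0:ℝ) < Real.sqrt n₀ := Real.sqrt_pos.2 hn₀
    have h4K : (4:ℝ) ^ K = 2 ^ K * 2 ^ K := by rw [← mul_pow]; norm_num
    have h2Kpos : (0:ℝ) < (2:ℝ) ^ K := by positivity
    have heq : (2:ℝ) ^ K * n₀ * (σ * B / (4 ^ K * k₀ * Real.sqrt n₀))
        = σ * Real.sqrt n₀ * B / (2 ^ K * k₀) := by
      have hss : Real.sqrt n₀ * Real.sqrt n₀ = n₀ := Real.mul_self_sqrt hn₀.le
      rw [h4K]
      field_simp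
      linear_combination (-1:ℝ) * hss
    rw [heq]
    have hle1 : σ * Real.sqrt n₀ * B / (2 ^ K * k₀) ≤ σ * Real.sqrt n₀ * B / k₀ := by
      apply div_le_div_of_nonneg_left (by positivity) (by positivity)
      nlinarith
    refine hle1.trans ?_
    have hnum : σ * Real.sqrt n₀ * B ≤ σ ^ ((1:ℝ) - 2*γ) * B * n₀ ^ ((1:ℝ)/2 + γ) := by
      nlinarith [mul_le_mul_of_nonneg_right hBineq hB.le]
    have := mul_le_mul_of_nonneg_right hnum (by positivity : (0:ℝ) ≤ k₀⁻¹)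
    simpa [div_eq_mul_inv] using this
  -- assemble
  have hT : n₀ * (1/(k₀ * P)) = σ ^ ((1:ℝ) - 2*γ) * n₀ ^ ((1:ℝ)/2 + γ) / k₀ := by
    rw [← hA, div_div, mul_one_div, mul_comm P k₀]
  have hpos : 0 < n₀ * (1/(k₀ * P)) := by positivity
  have hfirst : 5 * B * n₀ * ((∑ j ∈ Finset.range K, (1/2:ℝ)^j) * (1/(k₀ * P)))
      ≤ 10 * (σ ^ ((1:ℝ) - 2*γ) * B * n₀ ^ ((1:ℝ)/2 + γ) / k₀) := by
    calc 5 * B * n₀ * ((∑ j ∈ Finset.range K, (1/2:ℝ)^j) * (1/(k₀ * P)))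
        = 5 * B * (∑ j ∈ Finset.range K, (1/2:ℝ)^j) * (n₀ * (1/(k₀ * P))) := by ring
      _ ≤ 5 * B * 2 * (n₀ * (1/(k₀ * P))) := by
          exact mul_le_mul_of_nonneg_right
            (mul_le_mul_of_nonneg_left hgeom (by positivity : (0:ℝ) ≤ 5*B)) hpos.le
      _ = 10 * (σ ^ ((1:ℝ) - 2*γ) * B * n₀ ^ ((1:ℝ)/2 + γ) / k₀) := by rw [hT]; ring
  linarith
end
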